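/- For words x ∈ Σ* and y ∈ Σ⁺ with |x| = m and |y| = n, there exists a DFA with at most m + 2n + 2 states over Σ ∪ {$} recognizing the language x y* $ y⁺ = { x y^i $ y^j : i ≥ 0, j ≥ 1 }. -/

import Mathlib

/-- Prepend a finite word to an infinite word. -/
def prependW {α : Type} (u : List α) (w : ℕ → α) : ℕ → α :=
  fun i => if h : i < u.length then u.get ⟨i, h⟩ else w (i - u.length)

/-- The periodic infinite word `v^ω` (arbitrary when `v = []`). -/
def periodW {α : Type} [Inhabited α] (v : List α) : ℕ → α :=
  fun i => v.getD (i % v.length) default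

/-- The ultimately periodic word `u · v^ω`. -/
def upw {α : Type} [Inhabited α] (u v : List α) : ℕ → α :=
  prependW u (periodW v)

/-- The ultimately periodic words of an ω-language. -/
def UP {α : Type} [Inhabited α] (L : Set (ℕ → α)) : Set (ℕ → α) :=
  { w | ∃ u v : List α, v ≠ [] ∧ w = upw u v ∧ w ∈ L }

/-- `v^k` : `k`-fold repetition of the finite word `v`. -/
def rep {α : Type} (v : List α) (k : ℕ) : List α :=
  (List.replicate k v).flatten

namespace Stmt11

variable {α : Type}

abbrev St (x y : List α) : Type := Option (Fin x.length ⊕ Fin y.length ⊕ Fin y.length ⊕ Unit)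

open Classical in
noncomputable def dfaStep (x y : List α) (hn : 0 < y.length) : St x y → Option α → St x y
  | none, _ => none
  | some (.inl k), a =>
      if a = some (x.get k) then
        if h : (k : ℕ) + 1 < x.length then some (.inl ⟨(k : ℕ) + 1, h⟩)
        else some (.inr (.inl ⟨0, hn⟩))
      else none
  | some (.inr (.inl p)), a =>
      if a = some (y.get p) then
        if h : (p : ℕ) + 1 < y.length then some (.inr (.inl ⟨(p : ℕ) + 1, h⟩))
        else some (.inr (.inl ⟨0, hn⟩))
      else if (p : ℕ) = 0 ∧ a = none then some (.inr (.inr (.inl ⟨0, hn⟩)))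
      else none
  | some (.inr (.inr (.inl p))), a =>
      if a = some (y.get p) then
        if h : (p : ℕ) + 1 < y.length then some (.inr (.inr (.inl ⟨(p : ℕ) + 1, h⟩)))
        else some (.inr (.inr (.inr ())))
      else none
  | some (.inr (.inr (.inr _))), a =>
      if a = some (y.get ⟨0, hn⟩) then
        if h : 1 < y.length then some (.inr (.inr (.inl ⟨1, h⟩)))
        else some (.inr (.inr (.inr ())))
      else none

noncomputable def dfa (x y : List α) (hn : 0 < y.length) : DFA (Option α) (St x y) where
  step := dfaStep x y hn
  start := if h : 0 < x.length then some (.inl ⟨0, h⟩) else some (.inr (.inl ⟨0, hn⟩))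
  accept := {some (.inr (.inr (.inr ())))}

def Lst (x y : List α) : St x y → Set (List (Option α))
  | none => ∅
  | some (.inl k) =>
      {w | ∃ i j, 1 ≤ j ∧ w = (x.drop k ++ rep y i).map some ++ none :: (rep y j).map some}
  | some (.inr (.inl p)) =>
      if (p : ℕ) = 0 then
        {w | ∃ i j, 1 ≤ j ∧ w = (rep y i).map some ++ none :: (rep y j).map some}
      else
        {w | ∃ i j, 1 ≤ j ∧ w = (y.drop p ++ rep y i).map some ++ none :: (rep y j).map some}
  | some (.inr (.inr (.inl p))) => {w | ∃ j, w = (y.drop p ++ rep y j).map some}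
  | some (.inr (.inr (.inr _))) => {w | ∃ j, w = (rep y j).map some}

theorem Lst_dead (x y : List α) : Lst x y none = ∅ := rfl
theorem Lst_A (x y : List α) (k : Fin x.length) :
    Lst x y (some (.inl k)) =
      {w | ∃ i j, 1 ≤ j ∧ w = (x.drop k ++ rep y i).map some ++ none :: (rep y j).map some} := rfl
theorem Lst_B (x y : List α) (p : Fin y.length) :
    Lst x y (some (.inr (.inl p))) =
      if (p : ℕ) = 0 then
        {w | ∃ i j, 1 ≤ j ∧ w = (rep y i).map some ++ none :: (rep y j).map some}
      else
        {w | ∃ i j, 1 ≤ j ∧ w = (y.drop p ++ rep y i).map some ++ none :: (rep y j).map some} := rfl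
theorem Lst_C (x y : List α) (p : Fin y.length) :
    Lst x y (some (.inr (.inr (.inl p)))) = {w | ∃ j, w = (y.drop p ++ rep y j).map some} := rfl
theorem Lst_Acc (x y : List α) (u : Unit) :
    Lst x y (some (.inr (.inr (.inr u)))) = {w | ∃ j, w = (rep y j).map some} := rfl

theorem rep_succ (y : List α) (i : ℕ) : rep y (i + 1) = y ++ rep y i := by
  simp [rep, List.replicate_succ]

theorem rep_zero (y : List α) : rep y 0 = [] := rfl

theorem key (x y : List α) (hn : 0 < y.length) :
    ∀ (w : List (Option α)) (s : St x y),
      ((dfa x y hn).evalFrom s w ∈ (dfa x y hn).accept ↔ w ∈ Lst x y s) := by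
  intro w
  induction w with
  | nil =>
    intro s
    rcases s with _ | (k | p | p | u)
    · simp [dfa, Lst_dead]
    · simp only [DFA.evalFrom_nil, dfa, Lst_A, Set.mem_setOf_eq, Set.mem_singleton_iff]
      constructor
      · rintro h; exact absurd h (by simp)
      · rintro ⟨i, j, hj, h⟩
        exact absurd h (by simp)
    · simp only [DFA.evalFrom_nil, dfa, Lst_B, Set.mem_singleton_iff]
      split <;>
      · constructor
        · rintro h; exact absurd h (by simp)
        · rintro ⟨i, j, hj, h⟩; exact absurd h (by simp)
    · simp only [DFA.evalFrom_nil, dfa, Lst_C, Set.mem_setOf_eq, Set.mem_singleton_iff]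
      constructor
      · rintro h; exact absurd h (by simp)
      · rintro ⟨j, h⟩
        have hd : y.drop p ≠ [] := by
          simp only [ne_eq, List.drop_eq_nil_iff, not_le]; exact p.isLt
        exact absurd h (by
          intro h
          rw [List.nil_eq, List.map_eq_nil_iff, List.append_eq_nil_iff] at h
          exact hd h.1)
    · simp only [DFA.evalFrom_nil, dfa, Lst_Acc, Set.mem_setOf_eq, Set.mem_singleton_iff]
      constructor
      · intro _; exact ⟨0, rfl⟩
      · intro _; trivial
  | cons a w ih =>
    intro s
    rw [show (dfa x y hn).evalFrom s (a :: w) =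
          (dfa x y hn).evalFrom ((dfa x y hn).step s a) w from rfl, ih]
    have hy' : y = y.get ⟨0, hn⟩ :: y.drop 1 := by
      conv_lhs => rw [← List.drop_zero (l := y), List.drop_eq_getElem_cons hn]
      simp [List.get_eq_getElem]
    -- head-cons forms
    have hrep : ∀ i, (rep y (i + 1)).map (some : α → Option α)
        = some (y.get ⟨0, hn⟩) :: (y.drop 1 ++ rep y i).map some := by
      intro i
      rw [rep_succ]
      generalize rep y i = t
      conv_lhs => rw [hy']
      rfl
    have hstep : (dfa x y hn).step = dfaStep x y hn := rfl
    rcases s with _ | (k | p | p | u)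
    · -- dead
      simp [hstep, dfaStep, Lst_dead]
    · -- A k
      have hxA : ∀ i, ((x.drop (k : ℕ) ++ rep y i).map (some : α → Option α))
          = some (x.get k) :: (x.drop ((k : ℕ) + 1) ++ rep y i).map some := by
        intro i
        rw [List.drop_eq_getElem_cons k.isLt]
        simp only [List.cons_append, List.map_cons, List.get_eq_getElem]
      rw [hstep, dfaStep, Lst_A]
      split_ifs with ha hlt
      · -- to A (k+1)
        subst ha
        rw [Lst_A]
        simp only [Set.mem_setOf_eq]
        constructor
        · rintro ⟨i, j, hj, rfl⟩
          exact ⟨i, j, hj, by rw [hxA i, List.cons_append]⟩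
        · rintro ⟨i, j, hj, h⟩
          rw [hxA i, List.cons_append, List.cons_eq_cons] at h
          exact ⟨i, j, hj, h.2⟩
      · -- to B 0
        subst ha
        have hde : x.drop ((k : ℕ) + 1) = [] := by rw [List.drop_eq_nil_iff]; omega
        rw [Lst_B, if_pos rfl]
        simp only [Set.mem_setOf_eq]
        constructor
        · rintro ⟨i, j, hj, rfl⟩
          exact ⟨i, j, hj, by rw [hxA i, hde, List.nil_append, List.cons_append]⟩
        · rintro ⟨i, j, hj, h⟩
          rw [hxA i, hde, List.nil_append, List.cons_append, List.cons_eq_cons] at h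
          exact ⟨i, j, hj, h.2⟩
      · -- dead
        rw [Lst_dead]
        simp only [Set.mem_empty_iff_false, false_iff, Set.mem_setOf_eq]
        rintro ⟨i, j, hj, h⟩
        rw [hxA i, List.cons_append, List.cons_eq_cons] at h
        exact ha h.1
    · -- B p
      by_cases hp : (p : ℕ) = 0
      · -- B 0
        obtain rfl : p = ⟨0, hn⟩ := Fin.ext hp
        rw [hstep, dfaStep, Lst_B, if_pos rfl]
        split_ifs with ha hlt hc
        · -- a = some y[0], 1 < n : to B 1
          subst ha
          rw [Lst_B, if_neg (by simp)]
          simp only [Set.mem_setOf_eq]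
          constructor
          · rintro ⟨i, j, hj, rfl⟩
            exact ⟨i + 1, j, hj, by rw [hrep i, List.cons_append]⟩
          · rintro ⟨i, j, hj, h⟩
            rcases i with _ | i
            · rw [rep_zero] at h; simp at h
            · rw [hrep i, List.cons_append, List.cons_eq_cons] at h
              exact ⟨i, j, hj, h.2⟩
        · -- a = some y[0], n = 1 : to B 0
          subst ha
          have hde : y.drop 1 = [] := by rw [List.drop_eq_nil_iff]; omega
          rw [Lst_B, if_pos rfl]
          simp only [Set.mem_setOf_eq]
          constructor
          · rintro ⟨i, j, hj, rfl⟩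
            exact ⟨i + 1, j, hj, by rw [hrep i, hde, List.nil_append, List.cons_append]⟩
          · rintro ⟨i, j, hj, h⟩
            rcases i with _ | i
            · rw [rep_zero] at h; simp at h
            · rw [hrep i, hde, List.nil_append, List.cons_append, List.cons_eq_cons] at h
              exact ⟨i, j, hj, h.2⟩
        · -- a = none : to C 0
          obtain rfl : a = none := hc.2
          rw [Lst_C]
          simp only [Set.mem_setOf_eq, List.drop_zero]
          constructor
          · rintro ⟨j, rfl⟩
            exact ⟨0, j + 1, by omega, by rw [rep_zero, rep_succ]; rfl⟩
          · rintro ⟨i, j, hj, h⟩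
            rcases i with _ | i
            · rw [rep_zero] at h
              simp only [List.map_nil, List.nil_append, List.cons_eq_cons, true_and] at h
              obtain ⟨j', rfl⟩ : ∃ j', j = j' + 1 := ⟨j - 1, by omega⟩
              exact ⟨j', by rw [h, rep_succ]⟩
            · rw [hrep i, List.cons_append, List.cons_eq_cons] at h
              exact absurd h.1 (by simp)
        · -- dead
          rw [Lst_dead]
          simp only [Set.mem_empty_iff_false, false_iff, Set.mem_setOf_eq]
          rintro ⟨i, j, hj, h⟩
          rcases i with _ | i
          · rw [rep_zero] at h
            simp only [List.map_nil, List.nil_append, List.cons_eq_cons] at h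
            exact hc ⟨rfl, h.1⟩
          · rw [hrep i, List.cons_append, List.cons_eq_cons] at h
            exact ha h.1
      · -- B p, p ≠ 0
        have hyB : ∀ i, ((y.drop (p : ℕ) ++ rep y i).map (some : α → Option α))
            = some (y.get p) :: (y.drop ((p : ℕ) + 1) ++ rep y i).map some := by
          intro i
          rw [List.drop_eq_getElem_cons p.isLt]
          simp only [List.cons_append, List.map_cons, List.get_eq_getElem]
        rw [hstep, dfaStep, Lst_B, if_neg hp]
        split_ifs with ha hlt hc
        · -- to B (p+1)
          subst ha
          rw [Lst_B, if_neg (by simp)]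
          simp only [Set.mem_setOf_eq]
          constructor
          · rintro ⟨i, j, hj, rfl⟩
            exact ⟨i, j, hj, by rw [hyB i, List.cons_append]⟩
          · rintro ⟨i, j, hj, h⟩
            rw [hyB i, List.cons_append, List.cons_eq_cons] at h
            exact ⟨i, j, hj, h.2⟩
        · -- to B 0
          subst ha
          have hde : y.drop ((p : ℕ) + 1) = [] := by rw [List.drop_eq_nil_iff]; omega
          rw [Lst_B, if_pos rfl]
          simp only [Set.mem_setOf_eq]
          constructor
          · rintro ⟨i, j, hj, rfl⟩
            exact ⟨i, j, hj, by rw [hyB i, hde, List.nil_append, List.cons_append]⟩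
          · rintro ⟨i, j, hj, h⟩
            rw [hyB i, hde, List.nil_append, List.cons_append, List.cons_eq_cons] at h
            exact ⟨i, j, hj, h.2⟩
        · exact absurd hc.1 hp
        · -- dead
          rw [Lst_dead]
          simp only [Set.mem_empty_iff_false, false_iff, Set.mem_setOf_eq]
          rintro ⟨i, j, hj, h⟩
          rw [hyB i, List.cons_append, List.cons_eq_cons] at h
          exact ha h.1
    · -- C p
      have hyC : ∀ j, ((y.drop (p : ℕ) ++ rep y j).map (some : α → Option α))
          = some (y.get p) :: (y.drop ((p : ℕ) + 1) ++ rep y j).map some := by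
        intro j
        rw [List.drop_eq_getElem_cons p.isLt]
        simp only [List.cons_append, List.map_cons, List.get_eq_getElem]
      rw [hstep, dfaStep, Lst_C]
      split_ifs with ha hlt
      · -- to C (p+1)
        subst ha
        rw [Lst_C]
        simp only [Set.mem_setOf_eq]
        constructor
        · rintro ⟨j, rfl⟩
          exact ⟨j, by rw [hyC j]⟩
        · rintro ⟨j, h⟩
          rw [hyC j, List.cons_eq_cons] at h
          exact ⟨j, h.2⟩
      · -- to Acc
        subst ha
        have hde : y.drop ((p : ℕ) + 1) = [] := by rw [List.drop_eq_nil_iff]; omega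
        rw [Lst_Acc]
        simp only [Set.mem_setOf_eq]
        constructor
        · rintro ⟨j, rfl⟩
          exact ⟨j, by rw [hyC j, hde, List.nil_append]⟩
        · rintro ⟨j, h⟩
          rw [hyC j, hde, List.nil_append, List.cons_eq_cons] at h
          exact ⟨j, h.2⟩
      · -- dead
        rw [Lst_dead]
        simp only [Set.mem_empty_iff_false, false_iff, Set.mem_setOf_eq]
        rintro ⟨j, h⟩
        rw [hyC j, List.cons_eq_cons] at h
        exact ha h.1
    · -- Acc
      rw [hstep, dfaStep, Lst_Acc]
      split_ifs with ha hlt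
      · -- to C 1
        subst ha
        rw [Lst_C]
        simp only [Set.mem_setOf_eq]
        constructor
        · rintro ⟨j, rfl⟩
          exact ⟨j + 1, by rw [hrep j]⟩
        · rintro ⟨j, h⟩
          rcases j with _ | j
          · rw [rep_zero] at h; simp at h
          · rw [hrep j, List.cons_eq_cons] at h
            exact ⟨j, h.2⟩
      · -- to Acc
        subst ha
        have hde : y.drop 1 = [] := by rw [List.drop_eq_nil_iff]; omega
        rw [Lst_Acc]
        simp only [Set.mem_setOf_eq]
        constructor
        · rintro ⟨j, rfl⟩
          exact ⟨j + 1, by rw [hrep j, hde, List.nil_append]⟩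
        · rintro ⟨j, h⟩
          rcases j with _ | j
          · rw [rep_zero] at h; simp at h
          · rw [hrep j, hde, List.nil_append, List.cons_eq_cons] at h
            exact ⟨j, h.2⟩
      · -- dead
        rw [Lst_dead]
        simp only [Set.mem_empty_iff_false, false_iff, Set.mem_setOf_eq]
        rintro ⟨j, h⟩
        rcases j with _ | j
        · rw [rep_zero] at h; simp at h
        · rw [hrep j, List.cons_eq_cons] at h
          exact ha h.1

end Stmt11


/-- For `x ∈ Σ*` and `y ∈ Σ⁺` with `|x| = m`, `|y| = n`, there is a DFA with at
most `m + 2n + 2` states over `Σ ∪ {$}` (with `$` encoded as `none`)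
recognizing `x y* $ y⁺`. -/
theorem stmt_11 {α : Type} [Fintype α] (x y : List α) (hy : y ≠ []) :
    ∃ (σ : Type) (inst : Fintype σ) (D : DFA (Option α) σ),
      @Fintype.card σ inst ≤ x.length + 2 * y.length + 2 ∧
      D.accepts = { w : List (Option α) | ∃ i j : ℕ, 1 ≤ j ∧
        w = (x ++ rep y i).map some ++ none :: (rep y j).map some } := by
  have hn : 0 < y.length := List.length_pos_iff.mpr hy
  refine ⟨Stmt11.St x y, inferInstance, Stmt11.dfa x y hn, ?_, ?_⟩
  · simp only [Stmt11.St, Fintype.card_option, Fintype.card_sum, Fintype.card_fin,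
      Fintype.card_unit]
    omega
  · ext w
    rw [DFA.mem_accepts,
      show (Stmt11.dfa x y hn).eval w
        = (Stmt11.dfa x y hn).evalFrom (Stmt11.dfa x y hn).start w from rfl,
      Stmt11.key x y hn w,
      show (Stmt11.dfa x y hn).start
        = if h : 0 < x.length then some (.inl ⟨0, h⟩) else some (.inr (.inl ⟨0, hn⟩)) from rfl]
    by_cases hx : 0 < x.length
    · rw [dif_pos hx, Stmt11.Lst_A]
      simp only [Set.mem_setOf_eq, List.drop_zero]
      exact Iff.rfl
    · rw [dif_neg hx, Stmt11.Lst_B, if_pos rfl]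
      obtain rfl : x = [] := by
        rcases x with _ | _
        · rfl
        · exact absurd (by simp) hx
      simp only [Set.mem_setOf_eq, List.nil_append]
      exact Iff.rfl
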